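/- If a weak contact semilattice S can be embedded (as a contact semilattice) into a distributive lattice with additive weak contact, then S satisfies (D1) and (D2). -/

import Mathlib

section Aux

variable {L : Type*} [DistribLattice L] [OrderBot L] (δL : L → L → Prop)

/-- Additivity over finite sups. -/
lemma delta_finset_sup_split
    (hEmpL : ∀ a b : L, δL a b → ⊥ < a ∧ ⊥ < b)
    (hAddL : ∀ a b c : L, δL a (b ⊔ c) → δL a b ∨ δL a c)
    {ι : Type*} (s : Finset ι) (g : ι → L) (x : L)
    (h : δL x (s.sup g)) : ∃ i ∈ s, δL x (g i) := by
  classical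
  induction s using Finset.induction_on with
  | empty =>
      rw [Finset.sup_empty] at h
      exact absurd (hEmpL _ _ h).2 (lt_irrefl _)
  | insert _ _ hm ih =>
      rename_i a s'
      rw [Finset.sup_insert] at h
      rcases hAddL _ _ _ h with h1 | h2
      · exact ⟨a, Finset.mem_insert_self _ _, h1⟩
      · obtain ⟨i, hi, hδi⟩ := ih h2
        exact ⟨i, Finset.mem_insert_of_mem hi, hδi⟩

/-- The key combinatorial lemma in the distributive lattice. -/
lemma d2_key
    (hSymL : ∀ a b : L, δL a b → δL b a)
    (hEmpL : ∀ a b : L, δL a b → ⊥ < a ∧ ⊥ < b)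
    (hExtL : ∀ a b a₁ b₁ : L, δL a b → a ≤ a₁ → b ≤ b₁ → δL a₁ b₁)
    (hRefL : ∀ n : L, n ≠ ⊥ → δL n n)
    (hAddL : ∀ a b c : L, δL a (b ⊔ c) → δL a b ∨ δL a c)
    {n : ℕ} (d : Fin n → Fin 2 → L)
    (hd : ∀ i, ¬ δL (d i 0) (d i 1)) :
    ∀ (F : Finset (Fin n → Fin 2)) (x y : L) (σ τ : Fin n → Option (Fin 2)),
      δL x y →
      (∀ i ε, σ i = some ε → x ≤ d i ε) →
      (∀ i ε, τ i = some ε → y ≤ d i ε) →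
      (∀ f : Fin n → Fin 2,
        x ≤ Finset.univ.sup (fun i => d i (f i)) ∨
        y ≤ Finset.univ.sup (fun i => d i (f i))) →
      (∀ f : Fin n → Fin 2, f ∉ F →
        (∃ i, σ i = some (f i)) ∨ (∃ i, τ i = some (f i))) →
      False := by
  classical
  -- helper facts
  have hfin2 : ∀ ε : Fin 2, ε ≠ 1 - ε := by decide
  have hdsym : ∀ (i : Fin n) (ε ε' : Fin 2), ε ≠ ε' → ¬ δL (d i ε) (d i ε') := by
    intro i ε ε' hne hδδ
    have h01 : (ε = 0 ∧ ε' = 1) ∨ (ε = 1 ∧ ε' = 0) := by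
      revert hne; fin_cases ε <;> fin_cases ε' <;> simp
    rcases h01 with ⟨h1, h2⟩ | ⟨h1, h2⟩ <;> subst h1 <;> subst h2
    · exact hd i hδδ
    · exact hd i (hSymL _ _ hδδ)
  have hdis : ∀ (i : Fin n) (ε ε' : Fin 2), ε ≠ ε' → d i ε ⊓ d i ε' = ⊥ := by
    intro i ε ε' hne
    by_contra hne'
    exact hdsym i ε ε' hne
      (hExtL _ _ _ _ (hRefL _ hne') inf_le_left inf_le_right)
  intro F
  induction F using Finset.strongInduction with
  | _ F ih =>
  intro x y σ τ hxy hσ hτ hcov hinv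
  rcases F.eq_empty_or_nonempty with rfl | ⟨f₀, hf₀⟩
  · -- base case: σ and τ block every function
    by_cases hcompat : ∃ (i : Fin n) (ε ε' : Fin 2),
        σ i = some ε ∧ τ i = some ε' ∧ ε ≠ ε'
    · obtain ⟨i, ε, ε', h1, h2, h3⟩ := hcompat
      exact hdsym i ε ε' h3 (hExtL _ _ _ _ hxy (hσ i ε h1) (hτ i ε' h2))
    · push_neg at hcompat
      set f : Fin n → Fin 2 := fun i =>
        (σ i).elim ((τ i).elim 0 (fun ε => 1 - ε)) (fun ε => 1 - ε) with hf
      have hfσ : ∀ i ε, σ i = some ε → f i = 1 - ε := by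
        intro i ε h; rw [hf]; simp [h]
      have hfτ : ∀ i ε, σ i = none → τ i = some ε → f i = 1 - ε := by
        intro i ε h1 h2; rw [hf]; simp [h1, h2]
      rcases hinv f (Finset.notMem_empty f) with ⟨i, hi⟩ | ⟨i, hi⟩
      · have hfi : f i = 1 - f i := hfσ i (f i) hi
        exact hfin2 (f i) hfi
      · rcases h2 : σ i with _ | ε₂
        · exact hfin2 (f i) (hfτ i (f i) h2 hi)
        · have heq : ε₂ = f i := hcompat i ε₂ (f i) h2 hi
          have hfi : f i = 1 - ε₂ := hfσ i ε₂ h2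
          rw [heq] at hfi
          exact hfin2 (f i) hfi
  · -- inductive step: process f₀
    have hsub : F.erase f₀ ⊂ F := Finset.erase_ssubset hf₀
    -- main step, stated for the x-side; used symmetrically
    have step : ∀ (x y : L) (σ τ : Fin n → Option (Fin 2)),
        δL x y →
        (∀ i ε, σ i = some ε → x ≤ d i ε) →
        (∀ i ε, τ i = some ε → y ≤ d i ε) →
        (∀ f : Fin n → Fin 2,
          x ≤ Finset.univ.sup (fun i => d i (f i)) ∨
          y ≤ Finset.univ.sup (fun i => d i (f i))) →
        (∀ f : Fin n → Fin 2, f ∉ F →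
          (∃ i, σ i = some (f i)) ∨ (∃ i, τ i = some (f i))) →
        x ≤ Finset.univ.sup (fun i => d i (f₀ i)) →
        (∀ (x' y' : L) (σ' τ' : Fin n → Option (Fin 2)),
          δL x' y' →
          (∀ i ε, σ' i = some ε → x' ≤ d i ε) →
          (∀ i ε, τ' i = some ε → y' ≤ d i ε) →
          (∀ f : Fin n → Fin 2,
            x' ≤ Finset.univ.sup (fun i => d i (f i)) ∨
            y' ≤ Finset.univ.sup (fun i => d i (f i))) →
          (∀ f : Fin n → Fin 2, f ∉ F.erase f₀ →
            (∃ i, σ' i = some (f i)) ∨ (∃ i, τ' i = some (f i))) →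
          False) →
        False := by
      intro x y σ τ hxy hσ hτ hcov hinv hle continue_
      -- decompose x along the cover S_{f₀}
      have hx_eq : x = Finset.univ.sup (fun i => x ⊓ d i (f₀ i)) := by
        rw [← Finset.sup_inf_distrib_left]
        exact (inf_eq_left.mpr hle).symm
      have hyx : δL y x := hSymL _ _ hxy
      rw [hx_eq] at hyx
      obtain ⟨i, -, hδi⟩ :=
        delta_finset_sup_split δL hEmpL hAddL _ _ _ hyx
      set x' := x ⊓ d i (f₀ i) with hx'
      have hx'x : x' ≤ x := inf_le_left
      have hx'd : x' ≤ d i (f₀ i) := inf_le_right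
      -- possible conflict with σ at i
      rcases hσi : σ i with _ | ε
      case _ => -- σ i = none, no conflict
        refine continue_ x' y (Function.update σ i (some (f₀ i))) τ
          (hSymL _ _ hδi) ?_ hτ ?_ ?_
        · intro j ε' hj
          by_cases hji : j = i
          · subst hji
            rw [Function.update_self] at hj
            exact (Option.some.inj hj) ▸ hx'd
          · rw [Function.update_of_ne hji] at hj
            exact le_trans hx'x (hσ j ε' hj)
        · intro f
          rcases hcov f with h | h
          · exact Or.inl (le_trans hx'x h)
          · exact Or.inr h
        · intro f hf
          by_cases hff : f = f₀
          · subst hff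
            exact Or.inl ⟨i, by rw [Function.update_self]⟩
          · have hfF : f ∉ F := by
              intro hmem
              exact hf (Finset.mem_erase.mpr ⟨hff, hmem⟩)
            rcases hinv f hfF with ⟨j, hj⟩ | ⟨j, hj⟩
            · by_cases hji : j = i
              · subst hji; rw [hσi] at hj; exact absurd hj.symm (Option.some_ne_none _)
              · exact Or.inl ⟨j, by rw [Function.update_of_ne hji]; exact hj⟩
            · exact Or.inr ⟨j, hj⟩
      case _ => -- σ i = some ε
        by_cases hεf : ε = f₀ i
        · -- no conflict, σ already records f₀ i at i; keep σ
          subst hεf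
          refine continue_ x' y σ τ (hSymL _ _ hδi)
            (fun j ε' hj => le_trans hx'x (hσ j ε' hj)) hτ ?_ ?_
          · intro f
            rcases hcov f with h | h
            · exact Or.inl (le_trans hx'x h)
            · exact Or.inr h
          · intro f hf
            by_cases hff : f = f₀
            · subst hff; exact Or.inl ⟨i, hσi⟩
            · exact hinv f (fun hmem => hf (Finset.mem_erase.mpr ⟨hff, hmem⟩))
        · -- conflict: x' ≤ d i ε ⊓ d i (f₀ i) = ⊥, but δL y x'
          have hx'bot : x' ≤ (⊥ : L) := by
            rw [← hdis i ε (f₀ i) hεf]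
            exact le_inf (le_trans hx'x (hσ i ε hσi)) hx'd
          have := (hEmpL _ _ hδi).2
          exact absurd (lt_of_lt_of_le this hx'bot) (lt_irrefl _)
    rcases hcov f₀ with hle | hle
    · exact step x y σ τ hxy hσ hτ hcov hinv hle
        (fun x' y' σ' τ' h1 h2 h3 h4 h5 => ih _ hsub x' y' σ' τ' h1 h2 h3 h4 h5)
    · -- symmetric: process the y-side by swapping roles
      refine step y x τ σ (hSymL _ _ hxy) hτ hσ
        (fun f => (hcov f).symm) (fun f hf => (hinv f hf).symm) hle ?_
      intro x' y' σ' τ' h1 h2 h3 h4 h5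
      exact ih _ hsub y' x' τ' σ' (hSymL _ _ h1) h3 h2
        (fun f => (h4 f).symm) (fun f hf => (h5 f hf).symm)

end Aux

/-- If a weak contact semilattice embeds into a distributive lattice with
an additive weak contact relation, then it satisfies (D1) and (D2). -/
theorem embeddable_implies_d1_d2 {S L : Type*} [SemilatticeSup S] [OrderBot S]
    [DistribLattice L] [OrderBot L]
    (δS : S → S → Prop) (δL : L → L → Prop)
    (hSymS : ∀ a b : S, δS a b → δS b a)
    (hEmpS : ∀ a b : S, δS a b → ⊥ < a ∧ ⊥ < b)
    (hExtS : ∀ a b a₁ b₁ : S, δS a b → a ≤ a₁ → b ≤ b₁ → δS a₁ b₁)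
    (hRefS : ∀ n : S, n ≠ ⊥ → δS n n)
    (hSymL : ∀ a b : L, δL a b → δL b a)
    (hEmpL : ∀ a b : L, δL a b → ⊥ < a ∧ ⊥ < b)
    (hExtL : ∀ a b a₁ b₁ : L, δL a b → a ≤ a₁ → b ≤ b₁ → δL a₁ b₁)
    (hRefL : ∀ n : L, n ≠ ⊥ → δL n n)
    (hAddL : ∀ a b c : L, δL a (b ⊔ c) → δL a b ∨ δL a c)
    (φ : S → L) (hinj : Function.Injective φ) (hbot : φ ⊥ = ⊥)
    (hsup : ∀ a b : S, φ (a ⊔ b) = φ a ⊔ φ b)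
    (hδ : ∀ a b : S, δS a b ↔ δL (φ a) (φ b)) :
    (∀ a b c₀ c₁ : S, b ≤ a ⊔ c₀ → b ≤ a ⊔ c₁ → ¬ δS c₀ c₁ → b ≤ a) ∧
    (∀ (n : ℕ) (a b : S) (c : Fin n → Fin 2 → S),
      (∀ i, ¬ δS (c i 0) (c i 1)) →
      (∀ f : Fin n → Fin 2,
        b ≤ Finset.univ.sup (fun i => c i (f i)) ∨
        a ≤ Finset.univ.sup (fun i => c i (f i))) →
      ¬ δS b a) := by
  classical
  have hmono : ∀ a b : S, a ≤ b → φ a ≤ φ b := by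
    intro a b h
    have : φ b = φ a ⊔ φ b := by rw [← hsup, sup_eq_right.mpr h]
    rw [this]; exact le_sup_left
  have hrefl : ∀ a b : S, φ a ≤ φ b → a ≤ b := by
    intro a b h
    have h2 : φ (a ⊔ b) = φ b := by rw [hsup, sup_eq_right.mpr h]
    exact sup_eq_right.mp (hinj h2)
  constructor
  · -- (D1)
    intro a b c₀ c₁ h0 h1 hnc
    have hbotc : φ c₀ ⊓ φ c₁ = ⊥ := by
      by_contra hne
      exact hnc ((hδ c₀ c₁).mpr
        (hExtL _ _ _ _ (hRefL _ hne) inf_le_left inf_le_right))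
    have hb0 : φ b ≤ φ a ⊔ φ c₀ := by rw [← hsup]; exact hmono _ _ h0
    have hb1 : φ b ≤ φ a ⊔ φ c₁ := by rw [← hsup]; exact hmono _ _ h1
    have : φ b ≤ φ a := by
      have := le_inf hb0 hb1
      rwa [← sup_inf_left, hbotc, sup_bot_eq] at this
    exact hrefl _ _ this
  · -- (D2)
    intro n a b c hc hcov hba
    have hφsup : ∀ g : Fin n → S,
        φ (Finset.univ.sup g) = Finset.univ.sup (fun i => φ (g i)) := by
      intro g
      exact Finset.comp_sup_eq_sup_comp φ hsup hbot
    refine d2_key δL hSymL hEmpL hExtL hRefL hAddL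
      (fun i ε => φ (c i ε)) (fun i hδi => hc i ((hδ _ _).mpr hδi))
      Finset.univ (φ b) (φ a) (fun _ => none) (fun _ => none)
      ((hδ b a).mp hba) (by simp) (by simp) ?_ (by simp)
    intro f
    rcases hcov f with h | h
    · exact Or.inl (by rw [← hφsup]; exact hmono _ _ h)
    · exact Or.inr (by rw [← hφsup]; exact hmono _ _ h)
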